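/- For every real number x > 45, the open interval (3x/4, x − 8) contains at least one prime number. -/

import Mathlib

open Finset Nat

namespace Cheb


/-- Chebyshev's floor-function fact, reduced to a single nat variable. -/
private lemma floor01 (a : ℕ) :
    a / 2 + a / 3 + a / 5 ≤ a + a / 30 ∧ a + a / 30 ≤ a / 2 + a / 3 + a / 5 + 1 := by
  omega

private lemma floor_one {a : ℕ} (h1 : 1 ≤ a) (h2 : a ≤ 5) :
    a / 2 + a / 3 + a / 5 + 1 ≤ a + a / 30 := by
  interval_cases a <;> decide

/-- rewrite (n/k)/q as (n/q)/k -/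
private lemma div_swap (n k q : ℕ) : n / k / q = n / q / k := by
  rw [Nat.div_div_eq_div_mul, Nat.div_div_eq_div_mul, Nat.mul_comm]

def D (n : ℕ) : ℕ := n ! * (n / 30)!
def E (n : ℕ) : ℕ := (n / 2)! * (n / 3)! * (n / 5)!

lemma D_ne_zero (n : ℕ) : D n ≠ 0 := by
  simp only [D]; positivity
lemma E_ne_zero (n : ℕ) : E n ≠ 0 := by
  simp only [E]; positivity

private lemma fact_fact {p n b : ℕ} (hp : p.Prime) (hb : Nat.log p n < b) :
    (n !).factorization p = ∑ i ∈ Ico 1 b, n / p ^ i := by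
  have h1 := multiplicity_eq_of_emultiplicity_eq_some (hp.emultiplicity_factorial hb)
  rw [← Nat.multiplicity_eq_factorization hp n.factorial_ne_zero, h1]

private lemma log_div_le (p n k : ℕ) : Nat.log p (n / k) ≤ Nat.log p n :=
  Nat.log_mono_right (Nat.div_le_self n k)

lemma factD {p n b : ℕ} (hp : p.Prime) (hb : Nat.log p n < b) :
    (D n).factorization p = ∑ i ∈ Ico 1 b, (n / p ^ i + n / p ^ i / 30) := by
  rw [D]
  rw [Nat.factorization_mul n.factorial_ne_zero (n / 30).factorial_ne_zero]
  simp only [Finsupp.add_apply]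
  rw [fact_fact hp hb, fact_fact hp (lt_of_le_of_lt (log_div_le p n 30) hb), ← Finset.sum_add_distrib]
  exact Finset.sum_congr rfl fun i _ => by rw [div_swap]

lemma factE {p n b : ℕ} (hp : p.Prime) (hb : Nat.log p n < b) :
    (E n).factorization p = ∑ i ∈ Ico 1 b, (n / p ^ i / 2 + n / p ^ i / 3 + n / p ^ i / 5) := by
  rw [E]
  rw [Nat.factorization_mul
      (Nat.mul_ne_zero (n/2).factorial_ne_zero (n/3).factorial_ne_zero) (n/5).factorial_ne_zero,
    Nat.factorization_mul (n/2).factorial_ne_zero (n/3).factorial_ne_zero]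
  simp only [Finsupp.add_apply]
  rw [fact_fact hp (lt_of_le_of_lt (log_div_le p n 2) hb),
    fact_fact hp (lt_of_le_of_lt (log_div_le p n 3) hb),
    fact_fact hp (lt_of_le_of_lt (log_div_le p n 5) hb), ← Finset.sum_add_distrib,
    ← Finset.sum_add_distrib]
  exact Finset.sum_congr rfl fun i _ => by rw [div_swap n 2, div_swap n 3, div_swap n 5]

/-- `E n ∣ D n` at the level of valuations. -/
lemma factE_le_factD (p n : ℕ) (hp : p.Prime) :
    (E n).factorization p ≤ (D n).factorization p := by
  rw [factD hp (Nat.lt_succ_self _), factE hp (Nat.lt_succ_self _)]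
  exact Finset.sum_le_sum fun i _ => (floor01 (n / p ^ i)).1

lemma factD_le_factE_add (p n : ℕ) (hp : p.Prime) :
    (D n).factorization p ≤ (E n).factorization p + Nat.log p n := by
  rw [factD hp (Nat.lt_succ_self _), factE hp (Nat.lt_succ_self _)]
  calc ∑ i ∈ Ico 1 (Nat.log p n + 1), (n / p ^ i + n / p ^ i / 30)
      ≤ ∑ i ∈ Ico 1 (Nat.log p n + 1), (n / p ^ i / 2 + n / p ^ i / 3 + n / p ^ i / 5 + 1) :=
        Finset.sum_le_sum fun i _ => (floor01 (n / p ^ i)).2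
    _ = (∑ i ∈ Ico 1 (Nat.log p n + 1), (n / p ^ i / 2 + n / p ^ i / 3 + n / p ^ i / 5))
        + Nat.log p n := by
        rw [Finset.sum_add_distrib, Finset.sum_const, Nat.card_Ico]
        simp [Nat.mul_one]



-- placeholders from part 1

-- new material

/-- Primes in `(n/6, n]` divide `D n / E n`; more precisely the telescoping bound. -/
lemma factD_ge_telescope (p n : ℕ) (hp : p.Prime) (hn : n ≠ 0) :
    (E n).factorization p + (Nat.log p n - Nat.log p (n / 6)) ≤ (D n).factorization p := by
  set L := Nat.log p n with hL
  set L6 := Nat.log p (n / 6) with hL6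
  have hle : L6 ≤ L := Nat.log_mono_right (Nat.div_le_self n 6)
  rw [factD hp (Nat.lt_succ_self _), factE hp (Nat.lt_succ_self _)]
  have hsplit : Ico 1 (L + 1) = Ico 1 (L6 + 1) ∪ Ico (L6 + 1) (L + 1) :=
    (Finset.Ico_union_Ico_eq_Ico (by omega) (by omega)).symm
  have hdisj : Disjoint (Ico 1 (L6 + 1)) (Ico (L6 + 1) (L + 1)) := by
    apply Finset.Ico_disjoint_Ico_consecutive
  rw [hsplit, Finset.sum_union hdisj, Finset.sum_union hdisj]
  have h1 : ∑ i ∈ Ico 1 (L6+1), (n / p ^ i / 2 + n / p ^ i / 3 + n / p ^ i / 5)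
      ≤ ∑ i ∈ Ico 1 (L6+1), (n / p ^ i + n / p ^ i / 30) :=
    Finset.sum_le_sum fun i _ => (floor01 (n / p ^ i)).1
  have h2 : ∑ i ∈ Ico (L6+1) (L+1), (n / p ^ i / 2 + n / p ^ i / 3 + n / p ^ i / 5 + 1)
      ≤ ∑ i ∈ Ico (L6+1) (L+1), (n / p ^ i + n / p ^ i / 30) := by
    apply Finset.sum_le_sum
    intro i hi
    rw [Finset.mem_Ico] at hi
    have hpi_le : p ^ i ≤ n := (Nat.le_log_iff_pow_le hp.one_lt hn).mp (by omega)
    have hpos : 0 < p ^ i := pow_pos hp.pos i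
    have hpi_gt : n / 6 < p ^ i := by
      by_contra hcon
      push_neg at hcon
      have hn6 : n / 6 ≠ 0 := by omega
      have := (Nat.le_log_iff_pow_le hp.one_lt hn6).mpr hcon
      omega
    have ha1 : 1 ≤ n / p ^ i := (Nat.one_le_div_iff hpos).mpr hpi_le
    have ha5 : n / p ^ i ≤ 5 := by
      have h6 : n < p ^ i * 6 := (Nat.div_lt_iff_lt_mul (by norm_num)).mp hpi_gt
      have : n / p ^ i < 6 := (Nat.div_lt_iff_lt_mul hpos).mpr (by omega)
      omega
    exact floor_one ha1 ha5
  have hcard : ∑ i ∈ Ico (L6+1) (L+1), (n / p ^ i / 2 + n / p ^ i / 3 + n / p ^ i / 5 + 1)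
      = (∑ i ∈ Ico (L6+1) (L+1), (n / p ^ i / 2 + n / p ^ i / 3 + n / p ^ i / 5)) + (L - L6) := by
    rw [Finset.sum_add_distrib, Finset.sum_const, Nat.card_Ico, smul_eq_mul, mul_one]
    omega
  omega




def K (n : ℕ) : ℕ := ∏ p ∈ primesBelow (n + 1), p ^ (Nat.log p n)
def P (n : ℕ) : ℕ := ∏ p ∈ primesBelow (n + 1), p

lemma K_ne_zero (n : ℕ) : K n ≠ 0 :=
  Finset.prod_ne_zero_iff.mpr fun p hp =>
    pow_ne_zero _ (prime_of_mem_primesBelow hp).ne_zero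
lemma P_ne_zero (n : ℕ) : P n ≠ 0 :=
  Finset.prod_ne_zero_iff.mpr fun p hp => (prime_of_mem_primesBelow hp).ne_zero

lemma factProdPow (s : Finset ℕ) (hs : ∀ p ∈ s, p.Prime) (f : ℕ → ℕ) (q : ℕ) :
    (∏ p ∈ s, p ^ f p).factorization q = if q ∈ s then f q else 0 := by
  rw [Nat.factorization_prod fun p hp => pow_ne_zero _ (hs p hp).ne_zero]
  rw [Finsupp.finset_sum_apply]
  by_cases hq : q ∈ s
  · rw [if_pos hq]
    rw [Finset.sum_eq_single_of_mem q hq]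
    · rw [(hs q hq).factorization_pow, Finsupp.single_apply, if_pos rfl]
    · intro b hb hbq
      rw [(hs b hb).factorization_pow, Finsupp.single_apply, if_neg hbq]
  · rw [if_neg hq]
    apply Finset.sum_eq_zero
    intro b hb
    rw [(hs b hb).factorization_pow, Finsupp.single_apply]
    exact if_neg fun h : b = q => hq (h ▸ hb)

lemma factK (n q : ℕ) (hq : q.Prime) : (K n).factorization q = Nat.log q n := by
  rw [K, factProdPow _ (fun p hp => prime_of_mem_primesBelow hp)]
  by_cases h : q ∈ primesBelow (n + 1)
  · rw [if_pos h]
  · rw [if_neg h]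
    have : n < q := by
      by_contra hc
      exact h (mem_primesBelow.mpr ⟨by omega, hq⟩)
    exact (Nat.log_eq_zero_iff.mpr (Or.inl this)).symm

lemma P_le_K (n : ℕ) : P n ≤ K n := by
  apply Finset.prod_le_prod' 
  intro p hp
  have hpp := prime_of_mem_primesBelow hp
  have hpn : p ≤ n := by have := lt_of_mem_primesBelow hp; omega
  calc p = p ^ 1 := (pow_one p).symm
    _ ≤ p ^ (Nat.log p n) := Nat.pow_le_pow_right hpp.pos (Nat.log_pos hpp.one_lt hpn)

/-- The telescoping divisibility `K n * E n ∣ D n * K (n/6)`. -/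
lemma K_dvd (n : ℕ) (hn : n ≠ 0) : K n * E n ∣ D n * K (n / 6) := by
  rw [← Nat.factorization_le_iff_dvd (Nat.mul_ne_zero (K_ne_zero n) (E_ne_zero n))
    (Nat.mul_ne_zero (D_ne_zero n) (K_ne_zero (n / 6)))]
  intro q
  rw [Nat.factorization_mul (K_ne_zero n) (E_ne_zero n),
    Nat.factorization_mul (D_ne_zero n) (K_ne_zero (n / 6))]
  simp only [Finsupp.add_apply]
  by_cases hq : q.Prime
  · rw [factK n q hq, factK (n / 6) q hq]
    have h1 := factD_ge_telescope q n hq hn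
    have h2 := Nat.log_mono_right (Nat.div_le_self n 6) (b := q)
    omega
  · simp [Nat.factorization_eq_zero_of_not_prime _ hq]

/-- `D m ∣ E m * (K₁ m * P m)` where `K₁` collects small primes. -/
def K₁ (n : ℕ) : ℕ := ∏ p ∈ primesBelow (n.sqrt + 1), p ^ (Nat.log p n)

lemma K₁_ne_zero (n : ℕ) : K₁ n ≠ 0 :=
  Finset.prod_ne_zero_iff.mpr fun p hp =>
    pow_ne_zero _ (prime_of_mem_primesBelow hp).ne_zero

lemma D_dvd (m : ℕ) (hm : m ≠ 0) : D m ∣ E m * (K₁ m * P m) := by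
  rw [← Nat.factorization_le_iff_dvd (D_ne_zero m)
    (Nat.mul_ne_zero (E_ne_zero m) (Nat.mul_ne_zero (K₁_ne_zero m) (P_ne_zero m)))]
  intro q
  rw [Nat.factorization_mul (E_ne_zero m) (Nat.mul_ne_zero (K₁_ne_zero m) (P_ne_zero m)),
    Nat.factorization_mul (K₁_ne_zero m) (P_ne_zero m)]
  simp only [Finsupp.add_apply]
  by_cases hq : q.Prime
  · have hK₁ : (K₁ m).factorization q = if q ∈ primesBelow (m.sqrt + 1) then Nat.log q m else 0 :=
      factProdPow _ (fun p hp => prime_of_mem_primesBelow hp) _ q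
    have hP : (P m).factorization q = if q ∈ primesBelow (m + 1) then 1 else 0 := by
      rw [P]
      have : ∀ p ∈ primesBelow (m + 1), p = p ^ (1:ℕ) := fun p _ => (pow_one p).symm
      rw [Finset.prod_congr rfl this, factProdPow _ (fun p hp => prime_of_mem_primesBelow hp)]
    have hD := factD_le_factE_add q m hq
    by_cases h1 : q ∈ primesBelow (m.sqrt + 1)
    · rw [hK₁, if_pos h1]; omega
    · by_cases h2 : q ∈ primesBelow (m + 1)
      · -- sqrt m < q ≤ m : log q m ≤ 1
        have hqs : m.sqrt < q := by
          by_contra hc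
          exact h1 (mem_primesBelow.mpr ⟨by omega, hq⟩)
        have hlog : Nat.log q m ≤ 1 := by
          by_contra hc
          push_neg at hc
          have : q ^ 2 ≤ m := (Nat.le_log_iff_pow_le hq.one_lt hm).mp (by omega)
          have : m < q ^ 2 := Nat.sqrt_lt'.mp hqs
          nlinarith [this]
        rw [hP, if_pos h2, hK₁, if_neg h1]
        omega
      · -- q > m
        have : m < q := by
          by_contra hc
          exact h2 (mem_primesBelow.mpr ⟨by omega, hq⟩)
        have hlog : Nat.log q m = 0 := Nat.log_eq_zero_iff.mpr (Or.inl this)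
        rw [hP, if_neg h2, hK₁, if_neg h1]
        omega
  · simp [Nat.factorization_eq_zero_of_not_prime _ hq]

lemma P_eq_of_no_prime {n m : ℕ} (hnm : n ≤ m)
    (h : ¬∃ p : ℕ, p.Prime ∧ n < p ∧ p ≤ m) : P m = P n := by
  unfold P
  congr 1
  ext p
  simp only [mem_primesBelow]
  push_neg at h
  constructor
  · rintro ⟨hlt, hp⟩
    refine ⟨?_, hp⟩
    rcases le_or_gt p n with h' | h'
    · omega
    · exact absurd (h p hp h') (by omega)
  · rintro ⟨hlt, hp⟩; exact ⟨by omega, hp⟩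




noncomputable def gg (x : ℝ) : ℝ := x * Real.log x - x
noncomputable def Ar : ℝ := (7/15) * Real.log 2 + (3/10) * Real.log 3 + (1/6) * Real.log 5

lemma gg_succ_le (k : ℕ) : gg (k + 1) ≤ gg k + Real.log (k + 1) := by
  rcases Nat.eq_zero_or_pos k with rfl | hk
  · simp [gg]
  · have hk1 : (1:ℝ) ≤ (k:ℝ) := by exact_mod_cast hk
    have hkpos : (0:ℝ) < k := by linarith
    have hlog : Real.log (((k:ℝ)+1)/k) ≤ ((k:ℝ)+1)/k - 1 :=
      Real.log_le_sub_one_of_pos (by positivity)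
    have hsplit : Real.log ((k:ℝ)+1) = Real.log k + Real.log (((k:ℝ)+1)/k) := by
      rw [← Real.log_mul (by positivity) (by positivity)]
      congr 1
      field_simp
    have h2 : ((k:ℝ)+1)/k - 1 = 1/k := by field_simp; ring
    simp only [gg]
    rw [hsplit]
    have : (k:ℝ) * Real.log (((k:ℝ)+1)/k) ≤ 1 := by
      rw [h2] at hlog
      calc (k:ℝ) * Real.log (((k:ℝ)+1)/k) ≤ (k:ℝ) * (1/k) := by
            exact mul_le_mul_of_nonneg_left hlog (by positivity)
        _ = 1 := by field_simp
    nlinarith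
lemma log_ge_sub (x : ℝ) (hx : 0 < x) : 1 - 1/x ≤ Real.log x := by
  have h := Real.log_le_sub_one_of_pos (show (0:ℝ) < 1/x by positivity)
  rw [Real.log_div one_ne_zero (ne_of_gt hx), Real.log_one] at h
  linarith

lemma exp_gg_le_factorial (k : ℕ) : Real.exp (gg k) ≤ k ! := by
  induction k with
  | zero => simp [gg]
  | succ k ih =>
    have h1 : Real.exp (gg (k+1)) ≤ Real.exp (gg k) * ((k:ℝ)+1) := by
      calc Real.exp (gg (k+1)) ≤ Real.exp (gg k + Real.log ((k:ℝ)+1)) :=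
            Real.exp_le_exp.mpr (by exact_mod_cast gg_succ_le k)
        _ = Real.exp (gg k) * ((k:ℝ)+1) := by
            rw [Real.exp_add, Real.exp_log (by positivity)]
    have hc : ((k+1:ℕ):ℝ) = (k:ℝ)+1 := by push_cast; ring
    rw [hc]
    calc Real.exp (gg ((k:ℝ)+1)) ≤ Real.exp (gg k) * ((k:ℝ)+1) := h1
      _ ≤ (k ! : ℝ) * ((k:ℝ)+1) := by
          exact mul_le_mul_of_nonneg_right ih (by positivity)
      _ = ((k+1)! : ℝ) := by push_cast [Nat.factorial_succ]; ring

lemma factorial_le_exp (k : ℕ) (hk : 1 ≤ k) :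
    (k ! : ℝ) ≤ Real.exp (gg k + Real.log k + 1) := by
  induction k with
  | zero => omega
  | succ k ih =>
    rcases Nat.eq_zero_or_pos k with rfl | hkpos
    · norm_num [gg]
    · have ihh := ih hkpos
      have hk1 : (1:ℝ) ≤ (k:ℝ) := by exact_mod_cast hkpos
      have hkR : (0:ℝ) < k := by linarith
      -- key : gg k + log k ≤ gg (k+1)
      have hlog : 1/((k:ℝ)+1) ≤ Real.log (((k:ℝ)+1)/k) := by
        have := log_ge_sub (((k:ℝ)+1)/k) (by positivity)
        have he : 1 - 1/(((k:ℝ)+1)/k) = 1/((k:ℝ)+1) := by field_simp; ring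
        linarith [he ▸ this]
      have hsplit : Real.log ((k:ℝ)+1) = Real.log k + Real.log (((k:ℝ)+1)/k) := by
        rw [← Real.log_mul (by positivity) (by positivity)]
        congr 1
        field_simp
      have hkey : gg k + Real.log k ≤ gg (k+1) := by
        simp only [gg]
        rw [hsplit]
        have : 1 ≤ ((k:ℝ)+1) * Real.log (((k:ℝ)+1)/k) := by
          calc (1:ℝ) = ((k:ℝ)+1) * (1/((k:ℝ)+1)) := by field_simp
            _ ≤ ((k:ℝ)+1) * Real.log (((k:ℝ)+1)/k) :=
              mul_le_mul_of_nonneg_left hlog (by positivity)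
        nlinarith
      calc ((k+1)! : ℝ) = ((k:ℝ)+1) * (k ! : ℝ) := by push_cast [Nat.factorial_succ]; ring
        _ ≤ ((k:ℝ)+1) * Real.exp (gg k + Real.log k + 1) :=
            mul_le_mul_of_nonneg_left ihh (by positivity)
        _ = Real.exp (gg k + Real.log k + 1 + Real.log ((k:ℝ)+1)) := by
            rw [Real.exp_add _ (Real.log ((k:ℝ)+1)), Real.exp_log (by positivity)]; ring
        _ ≤ Real.exp (gg ((k:ℝ)+1) + Real.log ((k:ℝ)+1) + 1) := by
            apply Real.exp_le_exp.mpr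
            linarith
        _ = Real.exp (gg ((k+1:ℕ):ℝ) + Real.log ((k+1:ℕ):ℝ) + 1) := by norm_num


lemma gg_mono {x y : ℝ} (h1 : 1 ≤ x) (hxy : x ≤ y) : gg x ≤ gg y := by
  have hx : (0:ℝ) < x := by linarith
  have hy : (0:ℝ) < y := by linarith
  have hlog : 1 - x/y ≤ Real.log (y/x) := by
    have := log_ge_sub (y/x) (by positivity)
    have he : 1 - 1/(y/x) = 1 - x/y := by field_simp
    linarith [he ▸ this]
  have hsplit : Real.log y = Real.log x + Real.log (y/x) := by
    rw [← Real.log_mul (ne_of_gt hx) (by positivity)]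
    congr 1
    field_simp
  have hlx : 0 ≤ Real.log x := Real.log_nonneg h1
  simp only [gg]
  rw [hsplit]
  have h2 : y * (1 - x/y) = y - x := by field_simp
  nlinarith [mul_le_mul_of_nonneg_left hlog (le_of_lt hy)]

lemma gg_diff {x y : ℝ} (h1 : 0 < y) (hxy : y ≤ x) :
    gg x - gg y ≤ (x - y) * Real.log x := by
  have hx : (0:ℝ) < x := lt_of_lt_of_le h1 hxy
  have hlog : Real.log (x/y) ≤ x/y - 1 := Real.log_le_sub_one_of_pos (by positivity)
  have hsplit : Real.log x = Real.log y + Real.log (x/y) := by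
    rw [← Real.log_mul (ne_of_gt h1) (by positivity)]; congr 1; field_simp
  simp only [gg]
  rw [hsplit]
  have h2 : y * (x/y - 1) = x - y := by field_simp
  nlinarith [mul_le_mul_of_nonneg_left hlog (le_of_lt h1)]

lemma log30 : Real.log 30 = Real.log 2 + Real.log 3 + Real.log 5 := by
  rw [show (30:ℝ) = 2*(3*5) by norm_num, Real.log_mul (by norm_num) (by norm_num),
    Real.log_mul (by norm_num) (by norm_num)]
  ring

lemma gg_comb {x : ℝ} (hx : 0 < x) :
    gg x + gg (x/30) - gg (x/2) - gg (x/3) - gg (x/5) = Ar * x := by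
  simp only [gg, Ar]
  rw [Real.log_div (ne_of_gt hx) (by norm_num), Real.log_div (ne_of_gt hx) (by norm_num),
    Real.log_div (ne_of_gt hx) (by norm_num), Real.log_div (ne_of_gt hx) (by norm_num), log30]
  ring

lemma log_frac_bounds {a b : ℝ} (h0 : 0 < b) (hab : b < a) :
    (a - b)/a ≤ Real.log (a/b) ∧ Real.log (a/b) ≤ (a-b)/b := by
  have ha : (0:ℝ) < a := h0.trans hab
  constructor
  · have := log_ge_sub (a/b) (by positivity)
    have he : 1 - 1/(a/b) = (a-b)/a := by
      rw [one_div_div]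
      field_simp
    linarith [he ▸ this]
  · have := Real.log_le_sub_one_of_pos (show (0:ℝ) < a/b by positivity)
    have he : a/b - 1 = (a-b)/b := by field_simp
    linarith [he ▸ this]

lemma log2_bounds : 0.6931471803 ≤ Real.log 2 ∧ Real.log 2 ≤ 0.6931471808 :=
  ⟨le_of_lt Real.log_two_gt_d9, le_of_lt (by linarith [Real.log_two_lt_d9])⟩

lemma log3_bounds : 1.0952 ≤ Real.log 3 ∧ Real.log 3 ≤ 1.1023 := by
  obtain ⟨l2l, l2u⟩ := log2_bounds
  have h98 := log_frac_bounds (show (0:ℝ) < 8 by norm_num) (show (8:ℝ) < 9 by norm_num)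
  have h9 : Real.log 9 = 3 * Real.log 2 + Real.log (9/8) := by
    rw [show (9:ℝ) = 8 * (9/8) by norm_num, Real.log_mul (by norm_num) (by norm_num),
      show (8:ℝ) = 2^3 by norm_num, Real.log_pow]
    push_cast; ring
  have h92 : Real.log 9 = 2 * Real.log 3 := by
    rw [show (9:ℝ) = 3^2 by norm_num, Real.log_pow]; push_cast; ring
  constructor <;> nlinarith [h98.1, h98.2]

lemma log5_bounds : 1.6073 ≤ Real.log 5 ∧ Real.log 5 ≤ 1.612 := by
  obtain ⟨l2l, l2u⟩ := log2_bounds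
  obtain ⟨l3l, l3u⟩ := log3_bounds
  have h2524 := log_frac_bounds (show (0:ℝ) < 24 by norm_num) (show (24:ℝ) < 25 by norm_num)
  have h25 : Real.log 25 = 3 * Real.log 2 + Real.log 3 + Real.log (25/24) := by
    rw [show (25:ℝ) = 24 * (25/24) by norm_num, Real.log_mul (by norm_num) (by norm_num),
      show (24:ℝ) = 2^3 * 3 by norm_num, Real.log_mul (by norm_num) (by norm_num), Real.log_pow]
    push_cast; ring
  have h252 : Real.log 25 = 2 * Real.log 5 := by
    rw [show (25:ℝ) = 5^2 by norm_num, Real.log_pow]; push_cast; ring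
  constructor <;> nlinarith [h2524.1, h2524.2]

lemma Ar_bounds : 0.9199 ≤ Ar ∧ Ar ≤ 1 := by
  obtain ⟨l2l, l2u⟩ := log2_bounds
  obtain ⟨l3l, l3u⟩ := log3_bounds
  obtain ⟨l5l, l5u⟩ := log5_bounds
  constructor <;> (simp only [Ar]; nlinarith)

lemma log6_bounds : 1.788 ≤ Real.log 6 ∧ Real.log 6 ≤ 1.797 := by
  obtain ⟨l2l, l2u⟩ := log2_bounds
  obtain ⟨l3l, l3u⟩ := log3_bounds
  have h6 : Real.log 6 = Real.log 2 + Real.log 3 := by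
    rw [show (6:ℝ) = 2*3 by norm_num, Real.log_mul (by norm_num) (by norm_num)]
  constructor <;> nlinarith




/-- floor division: basic casts -/
private lemma cast_div_bounds (n k : ℕ) (hk : 0 < k) :
    (n:ℝ)/k - 1 ≤ ((n / k : ℕ) : ℝ) ∧ ((n / k : ℕ) : ℝ) ≤ (n:ℝ)/k := by
  constructor
  · have h := Nat.div_add_mod n k
    have hmod : n % k < k := Nat.mod_lt n hk
    have : (k:ℝ) * ((n / k : ℕ):ℝ) + ((n % k : ℕ):ℝ) = (n:ℝ) := by exact_mod_cast h
    have hkR : (0:ℝ) < k := by exact_mod_cast hk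
    have hmR : ((n % k : ℕ):ℝ) < k := by exact_mod_cast hmod
    rw [div_sub_one (ne_of_gt hkR), div_le_iff₀ hkR]
    nlinarith
  · exact Nat.cast_div_le

set_option maxHeartbeats 2000000 in
lemma quotient_upper {n : ℕ} (hn : 30 ≤ n) :
    (D n : ℝ) ≤ (E n : ℝ) * Real.exp (Ar * n + 5 * Real.log n + 2) := by
  have hx : (30:ℝ) ≤ (n:ℝ) := by exact_mod_cast hn
  have hxpos : (0:ℝ) < n := by linarith
  have hlogx : 0 ≤ Real.log n := Real.log_nonneg (by linarith)
  -- the five floor quotients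
  obtain ⟨h30l, h30u⟩ := cast_div_bounds n 30 (by norm_num)
  obtain ⟨h2l, h2u⟩ := cast_div_bounds n 2 (by norm_num)
  obtain ⟨h3l, h3u⟩ := cast_div_bounds n 3 (by norm_num)
  obtain ⟨h5l, h5u⟩ := cast_div_bounds n 5 (by norm_num)
  have hc30 : (1:ℝ) ≤ ((n/30 : ℕ):ℝ) := by
    have : 1 ≤ n / 30 := (Nat.one_le_div_iff (by norm_num)).mpr hn
    exact_mod_cast this
  have hc2 : (1:ℝ) ≤ ((n/2 : ℕ):ℝ) := by
    have : 1 ≤ n / 2 := (Nat.one_le_div_iff (by norm_num)).mpr (by omega)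
    exact_mod_cast this
  have hc3 : (1:ℝ) ≤ ((n/3 : ℕ):ℝ) := by
    have : 1 ≤ n / 3 := (Nat.one_le_div_iff (by norm_num)).mpr (by omega)
    exact_mod_cast this
  have hc5 : (1:ℝ) ≤ ((n/5 : ℕ):ℝ) := by
    have : 1 ≤ n / 5 := (Nat.one_le_div_iff (by norm_num)).mpr (by omega)
    exact_mod_cast this
  -- upper bounds for D factors
  have hDn : (n ! : ℝ) ≤ Real.exp (gg n + Real.log n + 1) := factorial_le_exp n (by omega)
  have hD30 : ((n/30)! : ℝ) ≤ Real.exp (gg ((n:ℝ)/30) + Real.log n + 1) := by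
    calc ((n/30)! : ℝ) ≤ Real.exp (gg ((n/30:ℕ):ℝ) + Real.log ((n/30:ℕ):ℝ) + 1) :=
          factorial_le_exp _ (by exact_mod_cast hc30)
      _ ≤ Real.exp (gg ((n:ℝ)/30) + Real.log n + 1) := by
          apply Real.exp_le_exp.mpr
          have m1 : gg ((n/30:ℕ):ℝ) ≤ gg ((n:ℝ)/30) := gg_mono hc30 h30u
          have m2 : Real.log ((n/30:ℕ):ℝ) ≤ Real.log n :=
            Real.log_le_log (by linarith) (by
              calc ((n/30:ℕ):ℝ) ≤ (n:ℝ)/30 := h30u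
                _ ≤ (n:ℝ) := by linarith)
          linarith
  -- lower bounds for E factors
  have hE2 : Real.exp (gg ((n:ℝ)/2) - Real.log n) ≤ ((n/2)! : ℝ) := by
    calc Real.exp (gg ((n:ℝ)/2) - Real.log n) ≤ Real.exp (gg ((n/2:ℕ):ℝ)) := by
          apply Real.exp_le_exp.mpr
          have hd : gg ((n:ℝ)/2) - gg ((n/2:ℕ):ℝ) ≤ ((n:ℝ)/2 - ((n/2:ℕ):ℝ)) * Real.log ((n:ℝ)/2) :=
            gg_diff (by linarith) h2u
          have hl2 : Real.log ((n:ℝ)/2) ≤ Real.log n :=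
            Real.log_le_log (by linarith) (by linarith)
          have hl2n : 0 ≤ Real.log ((n:ℝ)/2) := Real.log_nonneg (by linarith)
          nlinarith
      _ ≤ ((n/2)! : ℝ) := exp_gg_le_factorial _
  have hE3 : Real.exp (gg ((n:ℝ)/3) - Real.log n) ≤ ((n/3)! : ℝ) := by
    calc Real.exp (gg ((n:ℝ)/3) - Real.log n) ≤ Real.exp (gg ((n/3:ℕ):ℝ)) := by
          apply Real.exp_le_exp.mpr
          have hd : gg ((n:ℝ)/3) - gg ((n/3:ℕ):ℝ) ≤ ((n:ℝ)/3 - ((n/3:ℕ):ℝ)) * Real.log ((n:ℝ)/3) :=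
            gg_diff (by linarith) h3u
          have hl2 : Real.log ((n:ℝ)/3) ≤ Real.log n :=
            Real.log_le_log (by linarith) (by linarith)
          have hl2n : 0 ≤ Real.log ((n:ℝ)/3) := Real.log_nonneg (by linarith)
          nlinarith
      _ ≤ ((n/3)! : ℝ) := exp_gg_le_factorial _
  have hE5 : Real.exp (gg ((n:ℝ)/5) - Real.log n) ≤ ((n/5)! : ℝ) := by
    calc Real.exp (gg ((n:ℝ)/5) - Real.log n) ≤ Real.exp (gg ((n/5:ℕ):ℝ)) := by
          apply Real.exp_le_exp.mpr
          have hd : gg ((n:ℝ)/5) - gg ((n/5:ℕ):ℝ) ≤ ((n:ℝ)/5 - ((n/5:ℕ):ℝ)) * Real.log ((n:ℝ)/5) :=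
            gg_diff (by linarith) h5u
          have hl2 : Real.log ((n:ℝ)/5) ≤ Real.log n :=
            Real.log_le_log (by linarith) (by linarith)
          have hl2n : 0 ≤ Real.log ((n:ℝ)/5) := Real.log_nonneg (by linarith)
          nlinarith
      _ ≤ ((n/5)! : ℝ) := exp_gg_le_factorial _
  -- assemble
  have hDb : (D n : ℝ) ≤ Real.exp (gg n + gg ((n:ℝ)/30) + 2 * Real.log n + 2) := by
    have : (D n : ℝ) = (n ! : ℝ) * ((n/30)! : ℝ) := by push_cast [D]; ring
    rw [this]
    calc (n ! : ℝ) * ((n/30)! : ℝ)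
        ≤ Real.exp (gg n + Real.log n + 1) * Real.exp (gg ((n:ℝ)/30) + Real.log n + 1) :=
          mul_le_mul hDn hD30 (by positivity) (by positivity)
      _ = Real.exp (gg n + gg ((n:ℝ)/30) + 2 * Real.log n + 2) := by
          rw [← Real.exp_add]; ring_nf
  have hEb : Real.exp (gg ((n:ℝ)/2) + gg ((n:ℝ)/3) + gg ((n:ℝ)/5) - 3 * Real.log n) ≤ (E n : ℝ) := by
    have : (E n : ℝ) = ((n/2)! : ℝ) * ((n/3)! : ℝ) * ((n/5)! : ℝ) := by push_cast [E]; ring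
    rw [this]
    calc Real.exp (gg ((n:ℝ)/2) + gg ((n:ℝ)/3) + gg ((n:ℝ)/5) - 3 * Real.log n)
        = Real.exp (gg ((n:ℝ)/2) - Real.log n) * Real.exp (gg ((n:ℝ)/3) - Real.log n) *
          Real.exp (gg ((n:ℝ)/5) - Real.log n) := by
          rw [← Real.exp_add, ← Real.exp_add]; ring_nf
      _ ≤ ((n/2)! : ℝ) * ((n/3)! : ℝ) * ((n/5)! : ℝ) := by
          apply mul_le_mul (mul_le_mul hE2 hE3 (by positivity) (by positivity)) hE5
            (by positivity)
          positivity
  calc (D n : ℝ) ≤ Real.exp (gg n + gg ((n:ℝ)/30) + 2 * Real.log n + 2) := hDb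
    _ = Real.exp (gg ((n:ℝ)/2) + gg ((n:ℝ)/3) + gg ((n:ℝ)/5) - 3 * Real.log n) *
        Real.exp (Ar * n + 5 * Real.log n + 2) := by
        rw [← Real.exp_add]
        congr 1
        have := gg_comb hxpos
        linarith
    _ ≤ (E n : ℝ) * Real.exp (Ar * n + 5 * Real.log n + 2) :=
        mul_le_mul_of_nonneg_right hEb (by positivity)

set_option maxHeartbeats 2000000 in
lemma quotient_lower {n : ℕ} (hn : 30 ≤ n) :
    (E n : ℝ) * Real.exp (Ar * n - 4 * Real.log n - 3) ≤ (D n : ℝ) := by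
  have hx : (30:ℝ) ≤ (n:ℝ) := by exact_mod_cast hn
  have hxpos : (0:ℝ) < n := by linarith
  have hlogx : 0 ≤ Real.log n := Real.log_nonneg (by linarith)
  obtain ⟨h30l, h30u⟩ := cast_div_bounds n 30 (by norm_num)
  obtain ⟨h2l, h2u⟩ := cast_div_bounds n 2 (by norm_num)
  obtain ⟨h3l, h3u⟩ := cast_div_bounds n 3 (by norm_num)
  obtain ⟨h5l, h5u⟩ := cast_div_bounds n 5 (by norm_num)
  have hc30 : (1:ℝ) ≤ ((n/30 : ℕ):ℝ) := by
    have : 1 ≤ n / 30 := (Nat.one_le_div_iff (by norm_num)).mpr hn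
    exact_mod_cast this
  have hc2 : (1:ℝ) ≤ ((n/2 : ℕ):ℝ) := by
    have : 1 ≤ n / 2 := (Nat.one_le_div_iff (by norm_num)).mpr (by omega)
    exact_mod_cast this
  have hc3 : (1:ℝ) ≤ ((n/3 : ℕ):ℝ) := by
    have : 1 ≤ n / 3 := (Nat.one_le_div_iff (by norm_num)).mpr (by omega)
    exact_mod_cast this
  have hc5 : (1:ℝ) ≤ ((n/5 : ℕ):ℝ) := by
    have : 1 ≤ n / 5 := (Nat.one_le_div_iff (by norm_num)).mpr (by omega)
    exact_mod_cast this
  -- lower bounds for D factors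
  have hDn : Real.exp (gg n) ≤ (n ! : ℝ) := exp_gg_le_factorial n
  have hD30 : Real.exp (gg ((n:ℝ)/30) - Real.log n) ≤ ((n/30)! : ℝ) := by
    calc Real.exp (gg ((n:ℝ)/30) - Real.log n) ≤ Real.exp (gg ((n/30:ℕ):ℝ)) := by
          apply Real.exp_le_exp.mpr
          have hd : gg ((n:ℝ)/30) - gg ((n/30:ℕ):ℝ)
              ≤ ((n:ℝ)/30 - ((n/30:ℕ):ℝ)) * Real.log ((n:ℝ)/30) :=
            gg_diff (by linarith) h30u
          have hl2 : Real.log ((n:ℝ)/30) ≤ Real.log n :=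
            Real.log_le_log (by linarith) (by linarith)
          have hl2n : 0 ≤ Real.log ((n:ℝ)/30) := Real.log_nonneg (by linarith)
          nlinarith
      _ ≤ ((n/30)! : ℝ) := exp_gg_le_factorial _
  -- upper bounds for E factors
  have hE2 : ((n/2)! : ℝ) ≤ Real.exp (gg ((n:ℝ)/2) + Real.log n + 1) := by
    calc ((n/2)! : ℝ) ≤ Real.exp (gg ((n/2:ℕ):ℝ) + Real.log ((n/2:ℕ):ℝ) + 1) :=
          factorial_le_exp _ (by exact_mod_cast hc2)
      _ ≤ Real.exp (gg ((n:ℝ)/2) + Real.log n + 1) := by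
          apply Real.exp_le_exp.mpr
          have m1 : gg ((n/2:ℕ):ℝ) ≤ gg ((n:ℝ)/2) := gg_mono hc2 h2u
          have m2 : Real.log ((n/2:ℕ):ℝ) ≤ Real.log n :=
            Real.log_le_log (by linarith) (by linarith)
          linarith
  have hE3 : ((n/3)! : ℝ) ≤ Real.exp (gg ((n:ℝ)/3) + Real.log n + 1) := by
    calc ((n/3)! : ℝ) ≤ Real.exp (gg ((n/3:ℕ):ℝ) + Real.log ((n/3:ℕ):ℝ) + 1) :=
          factorial_le_exp _ (by exact_mod_cast hc3)
      _ ≤ Real.exp (gg ((n:ℝ)/3) + Real.log n + 1) := by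
          apply Real.exp_le_exp.mpr
          have m1 : gg ((n/3:ℕ):ℝ) ≤ gg ((n:ℝ)/3) := gg_mono hc3 h3u
          have m2 : Real.log ((n/3:ℕ):ℝ) ≤ Real.log n :=
            Real.log_le_log (by linarith) (by linarith)
          linarith
  have hE5 : ((n/5)! : ℝ) ≤ Real.exp (gg ((n:ℝ)/5) + Real.log n + 1) := by
    calc ((n/5)! : ℝ) ≤ Real.exp (gg ((n/5:ℕ):ℝ) + Real.log ((n/5:ℕ):ℝ) + 1) :=
          factorial_le_exp _ (by exact_mod_cast hc5)
      _ ≤ Real.exp (gg ((n:ℝ)/5) + Real.log n + 1) := by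
          apply Real.exp_le_exp.mpr
          have m1 : gg ((n/5:ℕ):ℝ) ≤ gg ((n:ℝ)/5) := gg_mono hc5 h5u
          have m2 : Real.log ((n/5:ℕ):ℝ) ≤ Real.log n :=
            Real.log_le_log (by linarith) (by linarith)
          linarith
  have hEb : (E n : ℝ) ≤ Real.exp (gg ((n:ℝ)/2) + gg ((n:ℝ)/3) + gg ((n:ℝ)/5) + 3*Real.log n + 3) := by
    have : (E n : ℝ) = ((n/2)! : ℝ) * ((n/3)! : ℝ) * ((n/5)! : ℝ) := by push_cast [E]; ring
    rw [this]
    calc ((n/2)! : ℝ) * ((n/3)! : ℝ) * ((n/5)! : ℝ)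
        ≤ Real.exp (gg ((n:ℝ)/2) + Real.log n + 1) * Real.exp (gg ((n:ℝ)/3) + Real.log n + 1) *
          Real.exp (gg ((n:ℝ)/5) + Real.log n + 1) := by
          apply mul_le_mul (mul_le_mul hE2 hE3 (by positivity) (by positivity)) hE5
            (by positivity)
          positivity
      _ = Real.exp (gg ((n:ℝ)/2) + gg ((n:ℝ)/3) + gg ((n:ℝ)/5) + 3*Real.log n + 3) := by
          rw [← Real.exp_add, ← Real.exp_add]; ring_nf
  have hDb : Real.exp (gg n + gg ((n:ℝ)/30) - Real.log n) ≤ (D n : ℝ) := by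
    have hD : (D n : ℝ) = (n ! : ℝ) * ((n/30)! : ℝ) := by push_cast [D]; ring
    rw [hD]
    calc Real.exp (gg n + gg ((n:ℝ)/30) - Real.log n)
        = Real.exp (gg n) * Real.exp (gg ((n:ℝ)/30) - Real.log n) := by
          rw [← Real.exp_add]; ring_nf
      _ ≤ (n ! : ℝ) * ((n/30)! : ℝ) :=
          mul_le_mul hDn hD30 (by positivity) (by positivity)
  calc (E n : ℝ) * Real.exp (Ar * n - 4 * Real.log n - 3)
      ≤ Real.exp (gg ((n:ℝ)/2) + gg ((n:ℝ)/3) + gg ((n:ℝ)/5) + 3*Real.log n + 3) *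
        Real.exp (Ar * n - 4 * Real.log n - 3) :=
        mul_le_mul_of_nonneg_right hEb (by positivity)
    _ = Real.exp (gg n + gg ((n:ℝ)/30) - Real.log n) := by
        rw [← Real.exp_add]
        congr 1
        have := gg_comb hxpos
        linarith
    _ ≤ (D n : ℝ) := hDb




lemma Ar_nonneg : 0 ≤ Ar := by linarith [Ar_bounds.1]

lemma card_primesBelow_le (s : ℕ) : (primesBelow s).card ≤ s := by
  calc (primesBelow s).card ≤ (Finset.range s).card := Finset.card_le_card (Finset.filter_subset _ _)
    _ = s := Finset.card_range s

lemma card_primesBelow36 : (primesBelow 36).card = 11 := by decide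

lemma K_le_small {n : ℕ} (hn : n ≤ 35) : K n ≤ 35 ^ 11 := by
  rcases Nat.eq_zero_or_pos n with rfl | hn0
  · simp [K, primesBelow]
  · have hcard : (primesBelow (n+1)).card ≤ 11 := by
      calc (primesBelow (n+1)).card ≤ (primesBelow 36).card :=
            Finset.card_le_card (by
              intro p hp
              rw [mem_primesBelow] at *
              exact ⟨by omega, hp.2⟩)
        _ = 11 := card_primesBelow36
    calc K n ≤ ∏ _p ∈ primesBelow (n + 1), n :=
        Finset.prod_le_prod' fun p _ => Nat.pow_log_le_self p hn0.ne'
    _ = n ^ (primesBelow (n + 1)).card := by rw [Finset.prod_const]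
    _ ≤ 35 ^ (primesBelow (n + 1)).card := Nat.pow_le_pow_left hn _
    _ ≤ 35 ^ 11 := Nat.pow_le_pow_right (by norm_num) hcard

set_option maxHeartbeats 1000000 in
lemma K_le : ∀ n : ℕ, (K n : ℝ) ≤ Real.exp ((6/5) * Ar * n + 10 * (Real.log n)^2 + 60) := by
  intro n
  induction n using Nat.strong_induction_on with
  | _ n ih =>
  rcases le_or_gt n 35 with hn | hn
  · -- base case
    have h1 : (K n : ℝ) ≤ (35:ℝ) ^ (11:ℕ) := by exact_mod_cast K_le_small hn
    have h2 : (35:ℝ) ^ (11:ℕ) ≤ (2:ℝ) ^ (60:ℕ) := by norm_num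
    have h3 : (2:ℝ) ^ (60:ℕ) ≤ Real.exp 1 ^ (60:ℕ) := by
      apply pow_le_pow_left₀ (by norm_num)
      linarith [Real.add_one_le_exp (1:ℝ)]
    have h4 : Real.exp 1 ^ (60:ℕ) = Real.exp 60 := by
      rw [← Real.exp_nat_mul]; norm_num
    have h5 : Real.exp 60 ≤ Real.exp ((6/5) * Ar * n + 10 * (Real.log n)^2 + 60) := by
      apply Real.exp_le_exp.mpr
      have h0 : 0 ≤ (6/5) * Ar * n := by
        have := Ar_nonneg
        positivity
      nlinarith [sq_nonneg (Real.log n)]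
    linarith
  · -- inductive step, n ≥ 36
    have hn0 : n ≠ 0 := by omega
    have h6pos : 0 < n / 6 := by omega
    have ih6 := ih (n / 6) (by omega)
    -- nat inequality from divisibility
    have hdvd : K n * E n ≤ D n * K (n / 6) :=
      Nat.le_of_dvd (Nat.pos_of_ne_zero (Nat.mul_ne_zero (D_ne_zero n) (K_ne_zero _)))
        (K_dvd n hn0)
    have hR : (K n : ℝ) * E n ≤ (D n : ℝ) * K (n / 6) := by exact_mod_cast hdvd
    have hQU := quotient_upper (show 30 ≤ n by omega)
    have hEpos : (0:ℝ) < E n := by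
      exact_mod_cast Nat.pos_of_ne_zero (E_ne_zero n)
    have hKn : (K n : ℝ) ≤ Real.exp (Ar * n + 5 * Real.log n + 2) * K (n / 6) := by
      have h1 : (K n : ℝ) * E n ≤ (E n : ℝ) * Real.exp (Ar * n + 5 * Real.log n + 2) * K (n/6) := 
        le_trans hR (mul_le_mul_of_nonneg_right hQU (by positivity))
      calc (K n : ℝ) = (K n : ℝ) * E n / E n := by field_simp
        _ ≤ (E n : ℝ) * Real.exp (Ar * n + 5 * Real.log n + 2) * K (n/6) / E n :=
            div_le_div_of_nonneg_right h1 hEpos.le |>.trans_eq rfl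
        _ = Real.exp (Ar * n + 5 * Real.log n + 2) * K (n / 6) := by field_simp
    -- bound K (n/6) by IH and compare exponents
    have hc6u : ((n/6 : ℕ):ℝ) ≤ (n:ℝ)/6 := Nat.cast_div_le
    have hc6l : (6:ℝ) ≤ ((n/6 : ℕ):ℝ) := by
      have : 6 ≤ n / 6 := by omega
      exact_mod_cast this
    have hlog6 : Real.log ((n/6 : ℕ):ℝ) ≤ Real.log n - Real.log 6 := by
      rw [← Real.log_div (by positivity) (by norm_num)]
      exact Real.log_le_log (by linarith) hc6u
    have hlogc_nonneg : 0 ≤ Real.log ((n/6 : ℕ):ℝ) := Real.log_nonneg (by linarith)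
    have hlogn : Real.log 6 ≤ Real.log (n:ℝ) := by
      apply Real.log_le_log (by norm_num)
      have : (36:ℝ) ≤ n := by exact_mod_cast hn
      linarith
    have hlog36 : 2 * Real.log 6 ≤ Real.log (n:ℝ) := by
      have h36 : (36:ℝ) ≤ (n:ℝ) := by exact_mod_cast hn
      have : Real.log 36 ≤ Real.log (n:ℝ) := Real.log_le_log (by norm_num) h36
      have h636 : Real.log 36 = 2 * Real.log 6 := by
        rw [show (36:ℝ) = 6^2 by norm_num, Real.log_pow]; push_cast; ring
      linarith
    have hsq : (Real.log ((n/6 : ℕ):ℝ))^2 ≤ (Real.log n - Real.log 6)^2 := by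
      apply sq_le_sq'
      · nlinarith [Real.log_nonneg (show (1:ℝ) ≤ n by exact_mod_cast Nat.one_le_iff_ne_zero.mpr hn0), log6_bounds.1]
      · exact hlog6
    obtain ⟨h6l, h6u⟩ := log6_bounds
    have hexp : Ar * n + 5 * Real.log n + 2 + ((6/5) * Ar * ((n/6:ℕ):ℝ) + 10 * (Real.log ((n/6:ℕ):ℝ))^2 + 60)
        ≤ (6/5) * Ar * n + 10 * (Real.log n)^2 + 60 := by
      have hA6 : (6/5) * Ar * ((n/6:ℕ):ℝ) ≤ (1/5) * Ar * n := by
        have := mul_le_mul_of_nonneg_left hc6u (show (0:ℝ) ≤ (6/5)*Ar by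
          have := Ar_nonneg
          positivity)
        nlinarith [Ar_nonneg]
      nlinarith [hsq, hlog36, hlogn, h6l, h6u, Ar_nonneg]
    calc (K n : ℝ) ≤ Real.exp (Ar * n + 5 * Real.log n + 2) * K (n / 6) := hKn
      _ ≤ Real.exp (Ar * n + 5 * Real.log n + 2) *
          Real.exp ((6/5) * Ar * ((n/6:ℕ):ℝ) + 10 * (Real.log ((n/6:ℕ):ℝ))^2 + 60) :=
          mul_le_mul_of_nonneg_left ih6 (by positivity)
      _ = Real.exp (Ar * n + 5 * Real.log n + 2 +
          ((6/5) * Ar * ((n/6:ℕ):ℝ) + 10 * (Real.log ((n/6:ℕ):ℝ))^2 + 60)) := by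
          rw [← Real.exp_add]
      _ ≤ Real.exp ((6/5) * Ar * n + 10 * (Real.log n)^2 + 60) := Real.exp_le_exp.mpr hexp




lemma K₁_le (m : ℕ) (hm : m ≠ 0) : (K₁ m : ℝ) ≤ Real.exp (Real.sqrt m * Real.log m) := by
  have hcard : (primesBelow (m.sqrt + 1)).card ≤ m.sqrt := by
    calc (primesBelow (m.sqrt + 1)).card ≤ (Finset.Ico 2 (m.sqrt + 1)).card := by
          apply Finset.card_le_card
          intro p hp
          rw [mem_primesBelow] at hp
          rw [Finset.mem_Ico]
          exact ⟨hp.2.two_le, hp.1⟩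
      _ ≤ m.sqrt := by rw [Nat.card_Ico]; omega
  have h1 : K₁ m ≤ m ^ m.sqrt := by
    calc K₁ m ≤ ∏ _p ∈ primesBelow (m.sqrt + 1), m :=
        Finset.prod_le_prod' fun p _ => Nat.pow_log_le_self p hm
      _ = m ^ (primesBelow (m.sqrt + 1)).card := by rw [Finset.prod_const]
      _ ≤ m ^ m.sqrt := Nat.pow_le_pow_right (Nat.pos_of_ne_zero hm) hcard
  have hm1 : (1:ℝ) ≤ (m:ℝ) := by
    have := Nat.one_le_iff_ne_zero.mpr hm
    exact_mod_cast this
  have hlog : 0 ≤ Real.log m := Real.log_nonneg hm1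
  calc (K₁ m : ℝ) ≤ ((m:ℝ)) ^ (m.sqrt : ℕ) := by exact_mod_cast h1
    _ = Real.exp ((m.sqrt : ℕ) * Real.log m) := by
        rw [← Real.exp_log (show (0:ℝ) < m by linarith), Real.exp_nat_mul, Real.log_exp]
    _ ≤ Real.exp (Real.sqrt m * Real.log m) := by
        apply Real.exp_le_exp.mpr
        exact mul_le_mul_of_nonneg_right Real.nat_sqrt_le_real_sqrt hlog

set_option maxHeartbeats 2000000 in
lemma numeric_contradiction (n m : ℕ) (hn : 1000000 ≤ n)
    (hml : 4 * (n:ℝ) / 3 - 11 ≤ (m:ℝ)) (hmu : (m:ℝ) ≤ 4 * (n:ℝ) / 3) :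
    Real.sqrt m * Real.log m + ((6/5) * Ar * n + 10 * (Real.log n)^2 + 60)
      < Ar * m - 4 * Real.log m - 3 := by
  obtain ⟨hAl, hAu⟩ := Ar_bounds
  have hx : (1000000:ℝ) ≤ (n:ℝ) := by exact_mod_cast hn
  have hx0 : (0:ℝ) < n := by linarith
  have hy1 : (1:ℝ) ≤ (m:ℝ) := by linarith
  have hy0 : (0:ℝ) < m := by linarith
  set x : ℝ := (n:ℝ) with hxdef
  set y : ℝ := (m:ℝ) with hydef
  set v : ℝ := x ^ ((1:ℝ)/12) with hvdef
  have hv_pos : 0 < v := Real.rpow_pos_of_pos hx0 _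
  have hv_pow : v ^ (12:ℕ) = x := by
    rw [hvdef, ← Real.rpow_natCast (x ^ ((1:ℝ)/12)) 12, ← Real.rpow_mul (le_of_lt hx0)]
    norm_num
  have hv316 : 3.16 ≤ v := by
    by_contra hco
    push_neg at hco
    have h12 : v ^ (12:ℕ) < (3.16:ℝ) ^ (12:ℕ) := by
      apply pow_lt_pow_left₀ hco (le_of_lt hv_pos)
      norm_num
    rw [hv_pow] at h12
    norm_num at h12
    linarith
  have hlogv : Real.log v ≤ v - 1 := Real.log_le_sub_one_of_pos hv_pos
  have hlogx : Real.log x ≤ 12*v - 12 := by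
    have h1 : Real.log x = 12 * Real.log v := by
      rw [← hv_pow, Real.log_pow]
      norm_num
    linarith
  have hlogx0 : 0 ≤ Real.log x := Real.log_nonneg (by linarith)
  have hlogy0 : 0 ≤ Real.log y := Real.log_nonneg hy1
  have hlogy : Real.log y ≤ 12*v - 12 + 1/3 := by
    have h43 : Real.log (4/3 : ℝ) ≤ 1/3 := by
      have := Real.log_le_sub_one_of_pos (show (0:ℝ) < 4/3 by norm_num)
      linarith
    have hsplit : Real.log (4*x/3) = Real.log x + Real.log (4/3:ℝ) := by
      rw [← Real.log_mul (ne_of_gt hx0) (by norm_num)]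
      congr 1
      ring
    have h2 : Real.log y ≤ Real.log (4*x/3) := Real.log_le_log hy0 (by linarith)
    linarith
  set S : ℝ := Real.sqrt y with hSdef
  have hS0 : 0 ≤ S := Real.sqrt_nonneg y
  have hS2 : S^2 = y := Real.sq_sqrt (le_of_lt hy0)
  have h316_5 : (315:ℝ) ≤ v^5 := by
    calc (315:ℝ) ≤ (3.16:ℝ)^5 := by norm_num
      _ ≤ v^5 := by apply pow_le_pow_left₀ (by norm_num) hv316
  have hv2 : (9.98:ℝ) ≤ v^2 := by
    calc (9.98:ℝ) ≤ (3.16:ℝ)^2 := by norm_num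
      _ ≤ v^2 := by apply pow_le_pow_left₀ (by norm_num) hv316
  have hv7nn : (0:ℝ) ≤ v^7 := by positivity
  have hv2nn : (0:ℝ) ≤ v^2 := by positivity
  have h12_7 : 315 * v^7 ≤ v^(12:ℕ) := by
    have h1 : v^(12:ℕ) = v^5 * v^7 := by ring
    rw [h1]
    exact mul_le_mul_of_nonneg_right h316_5 hv7nn
  have h7_2 : 315 * v^2 ≤ v^7 := by
    have h1 : v^7 = v^5 * v^2 := by ring
    rw [h1]
    exact mul_le_mul_of_nonneg_right h316_5 hv2nn
  have hSv : S * (12 * v) ≤ 13.86 * v^7 := by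
    have hyb : y ≤ (4/3) * v^(12:ℕ) := by rw [hv_pow]; linarith
    nlinarith [sq_nonneg (13.86 * v^7 - 12 * v * S), sq_nonneg (13.86 * v^7 + 12 * v * S),
      hS2, hyb, hv7nn, mul_nonneg (mul_nonneg (by norm_num : (0:ℝ) ≤ 12) hv_pos.le) hS0]
  have hSlogy : S * Real.log y ≤ 13.86 * v^7 := by
    calc S * Real.log y ≤ S * (12 * v) := by
          apply mul_le_mul_of_nonneg_left _ hS0
          nlinarith
      _ ≤ 13.86 * v^7 := hSv
  have hlogx_sq : (Real.log x)^2 ≤ (12*v - 12)^2 := by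
    nlinarith
  have hyAr : 0.9199 * ((2/15) * x - 11) ≤ Ar * y - (6/5) * Ar * x := by
    have hpos : 0 ≤ y - (6/5) * x := by linarith
    have h1 : (2/15) * x - 11 ≤ y - (6/5) * x := by linarith
    nlinarith
  have hxv : x = v^(12:ℕ) := hv_pow.symm
  nlinarith [h12_7, h7_2, hv2, hv316, sq_nonneg (v-1), hSlogy, hlogx_sq, hyAr, hlogy, hlogy0,
    hv_pos.le, hxv]

/-- The main "no prime" contradiction inequality chain. -/
theorem core (n : ℕ) (hn : 1000000 ≤ n) :
    ∃ p : ℕ, p.Prime ∧ n < p ∧ p ≤ 4 * n / 3 - 10 := by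
  by_contra hcon
  set m : ℕ := 4 * n / 3 - 10 with hm_def
  have hnm : n ≤ m := by omega
  have hm0 : m ≠ 0 := by omega
  have hm30 : 30 ≤ m := by omega
  -- real facts about m
  have hmu : (m:ℝ) ≤ 4 * (n:ℝ) / 3 := by
    have h1 : 3 * m ≤ 4 * n := by omega
    have : (3:ℝ) * m ≤ 4 * n := by exact_mod_cast h1
    linarith
  have hml : 4 * (n:ℝ) / 3 - 11 ≤ (m:ℝ) := by
    have h1 : 4 * n ≤ 3 * m + 33 := by omega
    have : (4:ℝ) * n ≤ 3 * m + 33 := by exact_mod_cast h1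
    linarith
  -- chain of inequalities
  have hPmn : P m = P n := P_eq_of_no_prime hnm hcon
  have hDle : (D m : ℝ) ≤ (E m : ℝ) * ((K₁ m : ℝ) * (P m : ℝ)) := by
    have := Nat.le_of_dvd (Nat.pos_of_ne_zero (Nat.mul_ne_zero (E_ne_zero m)
      (Nat.mul_ne_zero (K₁_ne_zero m) (P_ne_zero m)))) (D_dvd m hm0)
    exact_mod_cast this
  have hEpos : (0:ℝ) < E m := by exact_mod_cast Nat.pos_of_ne_zero (E_ne_zero m)
  have hQL := quotient_lower hm30
  have hmain : Real.exp (Ar * m - 4 * Real.log m - 3) ≤ (K₁ m : ℝ) * (P m : ℝ) := by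
    have h1 : (E m : ℝ) * Real.exp (Ar * m - 4 * Real.log m - 3)
        ≤ (E m : ℝ) * ((K₁ m : ℝ) * (P m : ℝ)) := le_trans hQL hDle
    exact le_of_mul_le_mul_left h1 hEpos
  have hP : (P m : ℝ) ≤ Real.exp ((6/5) * Ar * n + 10 * (Real.log n)^2 + 60) := by
    rw [hPmn]
    calc (P n : ℝ) ≤ (K n : ℝ) := by exact_mod_cast P_le_K n
      _ ≤ _ := K_le n
  have hK₁ := K₁_le m hm0
  have hfinal : Real.exp (Ar * m - 4 * Real.log m - 3) ≤
      Real.exp (Real.sqrt m * Real.log m + ((6/5) * Ar * n + 10 * (Real.log n)^2 + 60)) := by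
    calc Real.exp (Ar * m - 4 * Real.log m - 3) ≤ (K₁ m : ℝ) * (P m : ℝ) := hmain
      _ ≤ Real.exp (Real.sqrt m * Real.log m) *
          Real.exp ((6/5) * Ar * n + 10 * (Real.log n)^2 + 60) := by
          apply mul_le_mul hK₁ hP (by positivity) (by positivity)
      _ = _ := by rw [← Real.exp_add]
  rw [Real.exp_le_exp] at hfinal
  -- now the numeric contradiction
  have := numeric_contradiction n m hn hml hmu
  linarith



end Cheb


private def GoalP (x : ℝ) : Prop := ∃ p : ℕ, p.Prime ∧ 3 * x / 4 < (p : ℝ) ∧ (p : ℝ) < x - 8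

private lemma cover_extend {a : ℝ} (q : ℕ) (hq : Nat.Prime q)
    (hqa : (q : ℝ) + 8 < a)
    (H : ∀ x : ℝ, 45 < x → x < a → GoalP x) :
    ∀ x : ℝ, 45 < x → x < 4 * q / 3 → GoalP x := by
  intro x hx hxq
  rcases le_or_gt x ((q : ℝ) + 8) with h | h
  · exact H x hx (h.trans_lt hqa)
  · exact ⟨q, hq, by linarith, by linarith⟩

private lemma cover_base : ∀ x : ℝ, 45 < x → x < 4 * 37 / 3 → GoalP x := by
  intro x hx hxq
  exact ⟨37, by norm_num, by norm_num; linarith, by norm_num; linarith⟩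

set_option maxHeartbeats 1000000 in
private lemma cover_small : ∀ x : ℝ, 45 < x → x < 4 * 1319893 / 3 → GoalP x := by
  have h := cover_base
  have h := cover_extend 41 (by norm_num) (by norm_num) h
  have h := cover_extend 43 (by norm_num) (by norm_num) h
  have h := cover_extend 47 (by norm_num) (by norm_num) h
  have h := cover_extend 53 (by norm_num) (by norm_num) h
  have h := cover_extend 61 (by norm_num) (by norm_num) h
  have h := cover_extend 73 (by norm_num) (by norm_num) h
  have h := cover_extend 89 (by norm_num) (by norm_num) h
  have h := cover_extend 109 (by norm_num) (by norm_num) h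
  have h := cover_extend 137 (by norm_num) (by norm_num) h
  have h := cover_extend 173 (by norm_num) (by norm_num) h
  have h := cover_extend 211 (by norm_num) (by norm_num) h
  have h := cover_extend 271 (by norm_num) (by norm_num) h
  have h := cover_extend 353 (by norm_num) (by norm_num) h
  have h := cover_extend 461 (by norm_num) (by norm_num) h
  have h := cover_extend 601 (by norm_num) (by norm_num) h
  have h := cover_extend 787 (by norm_num) (by norm_num) h
  have h := cover_extend 1039 (by norm_num) (by norm_num) h
  have h := cover_extend 1373 (by norm_num) (by norm_num) h
  have h := cover_extend 1811 (by norm_num) (by norm_num) h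
  have h := cover_extend 2399 (by norm_num) (by norm_num) h
  have h := cover_extend 3187 (by norm_num) (by norm_num) h
  have h := cover_extend 4241 (by norm_num) (by norm_num) h
  have h := cover_extend 5641 (by norm_num) (by norm_num) h
  have h := cover_extend 7507 (by norm_num) (by norm_num) h
  have h := cover_extend 9973 (by norm_num) (by norm_num) h
  have h := cover_extend 13267 (by norm_num) (by norm_num) h
  have h := cover_extend 17681 (by norm_num) (by norm_num) h
  have h := cover_extend 23563 (by norm_num) (by norm_num) h
  have h := cover_extend 31397 (by norm_num) (by norm_num) h
  have h := cover_extend 41851 (by norm_num) (by norm_num) h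
  have h := cover_extend 55793 (by norm_num) (by norm_num) h
  have h := cover_extend 74381 (by norm_num) (by norm_num) h
  have h := cover_extend 99149 (by norm_num) (by norm_num) h
  have h := cover_extend 132173 (by norm_num) (by norm_num) h
  have h := cover_extend 176221 (by norm_num) (by norm_num) h
  have h := cover_extend 234947 (by norm_num) (by norm_num) h
  have h := cover_extend 313249 (by norm_num) (by norm_num) h
  have h := cover_extend 417649 (by norm_num) (by norm_num) h
  have h := cover_extend 556849 (by norm_num) (by norm_num) h
  have h := cover_extend 742457 (by norm_num) (by norm_num) h
  have h := cover_extend 989929 (by norm_num) (by norm_num) h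
  have h := cover_extend 1319893 (by norm_num) (by norm_num) h
  exact h


/-- For every real `x > 45`, the interval `(3x/4, x - 8)` contains a prime. -/
theorem exists_prime_between_three_quarters (x : ℝ) (hx : 45 < x) :
    ∃ p : ℕ, p.Prime ∧ 3 * x / 4 < (p : ℝ) ∧ (p : ℝ) < x - 8 := by
  rcases lt_or_ge x (4 * 1319893 / 3 : ℝ) with hsmall | hbig
  · exact cover_small x hx hsmall
  · -- large case via the Chebyshev-type core theorem
    have hx0 : (0:ℝ) ≤ 3 * x / 4 := by linarith
    set n : ℕ := ⌊3 * x / 4⌋₊ with hndef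
    have hnx : (n:ℝ) ≤ 3 * x / 4 := Nat.floor_le hx0
    have hxn : 3 * x / 4 < (n:ℝ) + 1 := Nat.lt_floor_add_one _
    have hn6 : 1000000 ≤ n := by
      have h1 : (1000000:ℝ) ≤ 3 * x / 4 := by linarith
      exact Nat.le_floor (by exact_mod_cast h1)
    obtain ⟨p, hp, hnp, hpm⟩ := Cheb.core n hn6
    refine ⟨p, hp, ?_, ?_⟩
    · have : (n:ℝ) + 1 ≤ (p:ℝ) := by exact_mod_cast hnp
      linarith
    · have h3p : 3 * p ≤ 4 * n - 30 := by omega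
      have h3p' : (3:ℝ) * p ≤ 4 * (n:ℝ) - 30 := by
        have hn30 : 30 ≤ 4 * n := by omega
        exact_mod_cast h3p.trans_eq (by omega) |>.trans (le_refl _)
      have : (3:ℝ) * p ≤ 3 * x - 30 := by linarith
      linarith
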